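/- For real x with x ≥ y > 0, (x² − y²)^{1/2} R_C(x², y²) = arccosh(x/y) = ln((x + √(x² − y²))/y). -/

import Mathlib

open MeasureTheory Real

noncomputable def RC (x y : ℝ) : ℝ :=
  (1/2) * ∫ t in Set.Ioi (0:ℝ), (Real.sqrt (t + x))⁻¹ * (t + y)⁻¹

noncomputable def RF (x y z : ℝ) : ℝ :=
  (1/2) * ∫ t in Set.Ioi (0:ℝ), (Real.sqrt ((t + x) * (t + y) * (t + z)))⁻¹

noncomputable def RD (x y z : ℝ) : ℝ :=
  (3/2) * ∫ t in Set.Ioi (0:ℝ),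
    (Real.sqrt ((t + x) * (t + y)))⁻¹ * ((t + z) * Real.sqrt (t + z))⁻¹

noncomputable def RJ (x y z p : ℝ) : ℝ :=
  (3/2) * ∫ t in Set.Ioi (0:ℝ),
    (Real.sqrt ((t + x) * (t + y) * (t + z)))⁻¹ * (t + p)⁻¹

noncomputable def RG (x y z : ℝ) : ℝ :=
  (1/4) * ∫ t in Set.Ioi (0:ℝ),
    (Real.sqrt ((t + x) * (t + y) * (t + z)))⁻¹ *
      (x / (t + x) + y / (t + y) + z / (t + z)) * t

theorem stmt6 (x y : ℝ) (hy : 0 < y) (hxy : y ≤ x) :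
    Real.sqrt (x ^ 2 - y ^ 2) * RC (x ^ 2) (y ^ 2) =
      Real.log ((x + Real.sqrt (x ^ 2 - y ^ 2)) / y) := by
  rcases hxy.eq_or_lt with rfl | hlt
  · simp [sub_self, Real.sqrt_zero, div_self hy.ne', Real.log_one]
  · have hx : 0 < x := hy.trans hlt
    set a := Real.sqrt (x ^ 2 - y ^ 2) with ha_def
    have hsub : 0 < x ^ 2 - y ^ 2 := by nlinarith
    have ha : 0 < a := Real.sqrt_pos.2 hsub
    have ha2 : a ^ 2 = x ^ 2 - y ^ 2 := Real.sq_sqrt hsub.le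
    have hax : a < x := by nlinarith
    -- antiderivative
    set F : ℝ → ℝ := fun t =>
      (1 / a) * (Real.log (Real.sqrt (t + x ^ 2) - a) - Real.log (Real.sqrt (t + x ^ 2) + a))
      with hF_def
    have hu_gt : ∀ t : ℝ, 0 ≤ t → a < Real.sqrt (t + x ^ 2) := by
      intro t ht
      rw [ha_def]
      exact Real.sqrt_lt_sqrt hsub.le (by nlinarith)
    -- derivative computation
    have hderiv : ∀ t ∈ Set.Ioi (0:ℝ),
        HasDerivAt F ((Real.sqrt (t + x ^ 2))⁻¹ * (t + y ^ 2)⁻¹) t := by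
      intro t ht
      have ht' : (0:ℝ) < t := ht
      have htx : 0 < t + x ^ 2 := by positivity
      set u := Real.sqrt (t + x ^ 2) with hu_def
      have hu : 0 < u := Real.sqrt_pos.2 htx
      have hu2 : u ^ 2 = t + x ^ 2 := Real.sq_sqrt htx.le
      have hua : a < u := hu_gt t ht'.le
      have hU : HasDerivAt (fun s => Real.sqrt (s + x ^ 2)) (1 / (2 * u)) t := by
        have h1 : HasDerivAt (fun s : ℝ => s + x ^ 2) 1 t := (hasDerivAt_id t).add_const _
        simpa using h1.sqrt (by positivity)
      have h2 : HasDerivAt (fun s => Real.log (Real.sqrt (s + x ^ 2) - a))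
          ((1 / (2 * u)) / (u - a)) t := (hU.sub_const a).log (sub_ne_zero.2 hua.ne')
      have h3 : HasDerivAt (fun s => Real.log (Real.sqrt (s + x ^ 2) + a))
          ((1 / (2 * u)) / (u + a)) t := (hU.add_const a).log (by linarith : (0:ℝ) < u + a).ne'
      have h4 := ((h2.sub h3).const_mul (1 / a))
      refine h4.congr_deriv ?_
      have hty : t + y ^ 2 = (u - a) * (u + a) := by nlinarith
      have h5 : u - a ≠ 0 := sub_ne_zero.2 hua.ne'
      have h6 : u + a ≠ 0 := by positivity
      rw [hty]
      field_simp
      ring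
    -- continuity at 0
    have hF0cont : ContinuousWithinAt F (Set.Ici 0) 0 := by
      apply ContinuousAt.continuousWithinAt
      have hc : ContinuousAt (fun s : ℝ => Real.sqrt (s + x ^ 2)) 0 :=
        ((continuous_id.add continuous_const).sqrt).continuousAt
      have h0 : Real.sqrt ((0:ℝ) + x ^ 2) = x := by
        rw [zero_add, Real.sqrt_sq hx.le]
      apply ContinuousAt.mul continuousAt_const
      apply ContinuousAt.sub
      · exact ContinuousAt.log (hc.sub continuousAt_const) (by rw [h0]; exact sub_ne_zero.2 hax.ne')
      · exact ContinuousAt.log (hc.add continuousAt_const) (by rw [h0]; positivity)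
    -- limit at infinity
    have hsqrt_top : Filter.Tendsto (fun t : ℝ => Real.sqrt (t + x ^ 2)) Filter.atTop
        Filter.atTop := by
      apply Filter.tendsto_atTop_atTop.2
      intro b
      refine ⟨b ^ 2, fun t ht => ?_⟩
      calc b ≤ Real.sqrt (b ^ 2) := by
              rcases le_total 0 b with hb | hb
              · rw [Real.sqrt_sq hb]
              · exact hb.trans (Real.sqrt_nonneg _)
        _ ≤ Real.sqrt (t + x ^ 2) := Real.sqrt_le_sqrt (by nlinarith)
    have hratio : Filter.Tendsto (fun u : ℝ => Real.log (u - a) - Real.log (u + a))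
        Filter.atTop (nhds 0) := by
      have h1 : Filter.Tendsto (fun u : ℝ => (u - a) / (u + a)) Filter.atTop
          (nhds 1) := by
        have h2 : Filter.Tendsto (fun u : ℝ => 1 - 2 * a / (u + a)) Filter.atTop
            (nhds (1 - 0)) := by
          apply Filter.Tendsto.sub tendsto_const_nhds
          exact Filter.Tendsto.div_atTop tendsto_const_nhds
            (Filter.tendsto_atTop_add_const_right _ a Filter.tendsto_id)
        rw [sub_zero] at h2
        apply h2.congr'
        filter_upwards [Filter.eventually_gt_atTop a] with u hu
        have h3 : u + a ≠ 0 := (by linarith : (0:ℝ) < u + a).ne'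
        field_simp
        ring
      have h4 : Filter.Tendsto (fun u : ℝ => Real.log ((u - a) / (u + a))) Filter.atTop
          (nhds 0) := by
        have := (Real.continuousAt_log one_ne_zero).tendsto.comp h1
        simpa [Function.comp_def] using this
      apply h4.congr'
      filter_upwards [Filter.eventually_gt_atTop a] with u hu
      rw [Real.log_div (sub_ne_zero.2 hu.ne') (by linarith : (0:ℝ) < u + a).ne']
    have htop : Filter.Tendsto F Filter.atTop (nhds 0) := by
      have := (hratio.comp hsqrt_top).const_mul (1 / a)
      simpa [hF_def, Function.comp] using this
    -- nonnegativity
    have hnonneg : ∀ t ∈ Set.Ioi (0:ℝ),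
        0 ≤ (Real.sqrt (t + x ^ 2))⁻¹ * (t + y ^ 2)⁻¹ := by
      intro t ht
      have ht' : (0:ℝ) < t := ht
      have : 0 < t + y ^ 2 := by positivity
      positivity
    -- integral evaluation
    have hint : ∫ t in Set.Ioi (0:ℝ), (Real.sqrt (t + x ^ 2))⁻¹ * (t + y ^ 2)⁻¹
        = (1 / a) * (Real.log (x + a) - Real.log (x - a)) := by
      rw [integral_Ioi_of_hasDerivAt_of_nonneg hF0cont hderiv hnonneg htop]
      have h0 : Real.sqrt ((0:ℝ) + x ^ 2) = x := by rw [zero_add, Real.sqrt_sq hx.le]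
      simp only [hF_def, h0]
      ring
    rw [RC, hint]
    have hxa : 0 < x - a := sub_pos.2 hax
    have hxa' : 0 < x + a := by positivity
    have hprod : (x - a) * (x + a) = y ^ 2 := by nlinarith
    have hlogs : Real.log (x - a) + Real.log (x + a) = 2 * Real.log y := by
      rw [← Real.log_mul hxa.ne' hxa'.ne', hprod]
      rw [show y ^ 2 = y * y by ring, Real.log_mul hy.ne' hy.ne']
      ring
    rw [Real.log_div hxa'.ne' hy.ne']
    have hhalf : a * (1 / 2 * (1 / a * (Real.log (x + a) - Real.log (x - a)))) =
        (Real.log (x + a) - Real.log (x - a)) / 2 := by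
      field_simp
    rw [hhalf]
    linarith [hlogs]
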